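/- Let d, n, s be positive integers, s ≥ 2, and H ⊆ V(T_{n,s}) with (s/(s−1))^(w(H)) > Σ_{i=0}^{d−1} C(n,i)/(s−1)^i. Then H contains a replica of T_{d,s}, i.e., there is a regular embedding of T_{d,s} into H. -/

import Mathlib

/-- Vertex set of the full `s`-ary tree `T_{n,s}` of depth `n-1`:
strings over an `s`-letter alphabet of length `< n`; the level of a vertex is
its length. -/
def sTreeVerts (s n : ℕ) : Set (List (Fin s)) := {x | x.length < n}

/-- Weight of a set of vertices of the `s`-ary tree:
`w(H) = Σ_{x ∈ H} s^(-level x)`. -/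
noncomputable def sWeight (s : ℕ) (H : Set (List (Fin s))) : ℝ :=
  ∑' x : H, (s : ℝ) ^ (-((x : List (Fin s)).length : ℤ))

/-- `f` is a regular embedding of `T_{d,s}`: equal levels map to equal levels,
and the `s` children of each vertex map to descendants of `s` distinct
children of the image. -/
def IsRegEmbS (s d : ℕ) (f : List (Fin s) → List (Fin s)) : Prop :=
  (∀ x y : List (Fin s), x.length < d → y.length < d → x.length = y.length →
      (f x).length = (f y).length) ∧
  (∀ x : List (Fin s), x.length + 1 < d → ∃ π : Fin s → Fin s,
      Function.Injective π ∧ ∀ i : Fin s, (f x ++ [π i]) <+: f (x ++ [i]))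

/-- `S(H)`: the set of signatures (sets of occupied levels) of all regular
embeddings of some `T_{d,s}`, `d ≥ 0`, into `H`. -/
def sSigs (s : ℕ) (H : Set (List (Fin s))) : Set (Set ℕ) :=
  {σ | ∃ (d : ℕ) (f : List (Fin s) → List (Fin s)), IsRegEmbS s d f ∧
      (∀ x : List (Fin s), x.length < d → f x ∈ H) ∧
      σ = {l : ℕ | ∃ x : List (Fin s), x.length < d ∧ (f x).length = l}}

open Finset

/-- Finite set of vertices of `T_{n,s}`. -/
def FV (s : ℕ) : ℕ → Finset (List (Fin s))
  | 0 => ∅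
  | n+1 => insert [] ((Finset.univ : Finset (Fin s)).biUnion fun i => (FV s n).image (i :: ·))

lemma mem_FV {s : ℕ} : ∀ (n : ℕ) (x : List (Fin s)), x ∈ FV s n ↔ x.length < n := by
  intro n
  induction n with
  | zero => intro x; simp [FV]
  | succ n ih =>
    intro x
    cases x with
    | nil => simp [FV]
    | cons i t =>
      simp only [FV, mem_insert, mem_biUnion, mem_image, Finset.mem_univ, true_and]
      constructor
      · rintro (h | ⟨j, y, hy, heq⟩)
        · simp at h
        · obtain ⟨rfl, rfl⟩ : j = i ∧ y = t := by
            injection heq with h1 h2; exact ⟨h1, h2⟩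
          simpa using (ih y).1 hy
      · intro h
        exact Or.inr ⟨i, t, (ih t).2 (by simpa using h), rfl⟩

noncomputable def wF (s n : ℕ) (H : Set (List (Fin s))) : ℝ :=
  ∑ x ∈ FV s n, Set.indicator H (fun y => (s : ℝ) ^ (-(y.length : ℤ))) x

lemma sWeight_eq_wF {s n : ℕ} {H : Set (List (Fin s))} (hH : H ⊆ sTreeVerts s n) :
    sWeight s H = wF s n H := by
  rw [sWeight, tsum_subtype H (fun x => (s : ℝ) ^ (-(x.length : ℤ)))]
  exact tsum_eq_sum (fun x hx => Set.indicator_of_notMem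
    (fun hxH => hx ((mem_FV n x).2 (hH hxH))) _)

noncomputable def gF (s n : ℕ) (H : Set (List (Fin s))) : ℝ :=
  ∑ T ∈ (Finset.range n).powerset,
    Set.indicator (sSigs s H) (fun _ => (((s : ℝ) - 1)⁻¹) ^ T.card) ↑T

lemma wF_succ {s n : ℕ} (hs : 0 < s) (H : Set (List (Fin s))) :
    wF s (n+1) H = Set.indicator H (fun _ => (1:ℝ)) []
      + (1 / s) * ∑ i : Fin s, wF s n {x | i :: x ∈ H} := by
  have hnil : ([] : List (Fin s)) ∉ (Finset.univ : Finset (Fin s)).biUnion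
      fun i => (FV s n).image (i :: ·) := by
    simp only [mem_biUnion, mem_image]
    rintro ⟨i, _, y, _, h⟩
    exact List.cons_ne_nil i y h
  have hdisj : ∀ a ∈ (Finset.univ : Finset (Fin s)), ∀ b ∈ (Finset.univ : Finset (Fin s)),
      a ≠ b → Disjoint ((FV s n).image (a :: ·)) ((FV s n).image (b :: ·)) := by
    intro a _ b _ hab
    simp only [Finset.disjoint_left, mem_image]
    rintro x ⟨y, _, rfl⟩ ⟨z, _, h⟩
    exact hab (by injection h with h1 _; exact h1.symm ▸ rfl)
  rw [wF, FV, Finset.sum_insert hnil, Finset.sum_biUnion hdisj]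
  have e0 : Set.indicator H (fun y : List (Fin s) => (s : ℝ) ^ (-(y.length : ℤ))) []
      = Set.indicator H (fun _ => (1:ℝ)) [] := by
    by_cases h : ([] : List (Fin s)) ∈ H <;> simp [h]
  have hs' : (s : ℝ) ≠ 0 := Nat.cast_ne_zero.2 hs.ne'
  have e1 : ∀ i : Fin s,
      ∑ x ∈ (FV s n).image (i :: ·),
        Set.indicator H (fun y : List (Fin s) => (s : ℝ) ^ (-(y.length : ℤ))) x
      = (1 / s) * wF s n {x | i :: x ∈ H} := by
    intro i
    rw [Finset.sum_image (by intro a _ b _ h; injection h), wF, Finset.mul_sum]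
    refine Finset.sum_congr rfl fun x _ => ?_
    by_cases hmem : i :: x ∈ H
    · rw [Set.indicator_of_mem hmem, Set.indicator_of_mem (by simpa using hmem)]
      simp only [List.length_cons]
      push_cast
      rw [neg_add, zpow_add₀ hs', zpow_neg_one]
      field_simp
    · rw [Set.indicator_of_notMem hmem,
        Set.indicator_of_notMem (by simpa using hmem), mul_zero]
  rw [e0]
  congr 1
  rw [Finset.mul_sum]
  refine Finset.sum_congr rfl fun i _ => ?_
  rw [e1 i]

lemma empty_sig {s : ℕ} (H : Set (List (Fin s))) : (∅ : Set ℕ) ∈ sSigs s H := by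
  refine ⟨0, id, ⟨?_, ?_⟩, ?_, ?_⟩
  · intro x y hx; exact absurd hx (Nat.not_lt_zero _)
  · intro x hx; exact absurd hx (by omega)
  · intro x hx; exact absurd hx (Nat.not_lt_zero _)
  · ext l; simp

lemma level_eq {s d : ℕ} {f : List (Fin s) → List (Fin s)} (hf : IsRegEmbS s d f) (z : Fin s)
    {x : List (Fin s)} (hx : x.length < d) :
    (f x).length = (f (List.replicate x.length z)).length :=
  hf.1 x _ hx (by simpa using hx) (by simp)

lemma level_lt {s d : ℕ} {f : List (Fin s) → List (Fin s)} (hf : IsRegEmbS s d f) (z : Fin s)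
    {j k : ℕ} (hjk : j < k) (hk : k < d) :
    (f (List.replicate j z)).length < (f (List.replicate k z)).length := by
  induction k with
  | zero => omega
  | succ k ih =>
    have step : (f (List.replicate k z)).length < (f (List.replicate (k+1) z)).length := by
      obtain ⟨π, -, hπ⟩ := hf.2 (List.replicate k z) (by simpa using hk)
      have hle := (hπ z).length_le
      rw [← List.replicate_succ'] at hle
      simp only [List.length_append, List.length_cons, List.length_nil] at hle
      omega
    rcases Nat.lt_succ_iff_lt_or_eq.1 hjk with h | rfl
    · exact (ih h (by omega)).trans step
    · exact step

lemma sig_eq {s d : ℕ} {f : List (Fin s) → List (Fin s)} (hf : IsRegEmbS s d f) (z : Fin s) :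
    {l : ℕ | ∃ x : List (Fin s), x.length < d ∧ (f x).length = l}
      = ↑((Finset.range d).image fun j => (f (List.replicate j z)).length) := by
  ext l
  simp only [Finset.coe_image, Finset.coe_range, Set.mem_image, Set.mem_Iio, Set.mem_setOf_eq]
  constructor
  · rintro ⟨x, hx, rfl⟩; exact ⟨x.length, hx, (level_eq hf z hx).symm⟩
  · rintro ⟨j, hj, rfl⟩; exact ⟨List.replicate j z, by simpa using hj, rfl⟩

lemma sig_card {s d : ℕ} {f : List (Fin s) → List (Fin s)} (hf : IsRegEmbS s d f) (z : Fin s) :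
    ((Finset.range d).image fun j => (f (List.replicate j z)).length).card = d := by
  rw [Finset.card_image_of_injOn, Finset.card_range]
  intro a ha b hb hab
  simp only [Finset.coe_range, Set.mem_Iio] at ha hb
  by_contra hne
  rcases Nat.lt_or_ge a b with h | h
  · exact (level_lt hf z h hb).ne hab
  · exact (level_lt hf z (lt_of_le_of_ne h (Ne.symm hne)) ha).ne hab.symm

lemma sig_shift {s : ℕ} {H : Set (List (Fin s))} (i : Fin s) {σ : Set ℕ}
    (hσ : σ ∈ sSigs s {x | i :: x ∈ H}) : (fun l => l + 1) '' σ ∈ sSigs s H := by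
  obtain ⟨d, f, hreg, hmem, rfl⟩ := hσ
  refine ⟨d, fun x => i :: f x, ⟨?_, ?_⟩, ?_, ?_⟩
  · intro x y hx hy hxy
    simpa using hreg.1 x y hx hy hxy
  · intro x hx
    obtain ⟨π, hπ, hpre⟩ := hreg.2 x hx
    refine ⟨π, hπ, fun j => ?_⟩
    show (i :: f x) ++ [π j] <+: i :: f (x ++ [j])
    rw [List.cons_append]
    exact List.cons_prefix_cons.2 ⟨rfl, hpre j⟩
  · intro x hx; exact hmem x hx
  · ext l
    simp only [Set.mem_image, Set.mem_setOf_eq, List.length_cons]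
    constructor
    · rintro ⟨l', ⟨x, hx, rfl⟩, rfl⟩; exact ⟨x, hx, rfl⟩
    · rintro ⟨x, hx, rfl⟩; exact ⟨(f x).length, ⟨x, hx, rfl⟩, rfl⟩

lemma reg_restrict {s d d' : ℕ} {f : List (Fin s) → List (Fin s)} (h : d ≤ d')
    (hf : IsRegEmbS s d' f) : IsRegEmbS s d f :=
  ⟨fun x y hx hy => hf.1 x y (lt_of_lt_of_le hx h) (lt_of_lt_of_le hy h),
   fun x hx => hf.2 x (by omega)⟩

lemma sig_card_lt {s d : ℕ} {H : Set (List (Fin s))} (hs : 0 < s)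
    (hno : ¬ ∃ f, IsRegEmbS s d f ∧ ∀ x : List (Fin s), x.length < d → f x ∈ H)
    {T : Finset ℕ} (hT : (↑T : Set ℕ) ∈ sSigs s H) : T.card < d := by
  obtain ⟨d', f, hreg, hmem, hsig⟩ := hT
  have hcard : T.card = d' := by
    have hTe := Finset.coe_injective (hsig.trans (sig_eq hreg ⟨0, hs⟩))
    rw [hTe, sig_card hreg ⟨0, hs⟩]
  by_contra hge
  push_neg at hge
  have hdd : d ≤ d' := hcard ▸ hge
  exact hno ⟨f, reg_restrict hdd hreg, fun x hx => hmem x (lt_of_lt_of_le hx hdd)⟩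

lemma sig_combine {s : ℕ} (hs : 0 < s) {H : Set (List (Fin s))} (h0 : [] ∈ H) (T : Finset ℕ)
    (hT : ∀ i : Fin s, (↑T : Set ℕ) ∈ sSigs s {x | i :: x ∈ H}) :
    (↑(insert 0 (T.image (· + 1))) : Set ℕ) ∈ sSigs s H := by
  have z : Fin s := ⟨0, hs⟩
  simp only [sSigs, Set.mem_setOf_eq] at hT
  choose d f hreg hmem hsig using hT
  have hd : ∀ i, T.card = d i := by
    intro i
    have hTe := Finset.coe_injective ((hsig i).trans (sig_eq (hreg i) z))
    rw [hTe, sig_card (hreg i) z]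
  -- all level functions agree
  have hlev : ∀ i j : Fin s, ∀ k, k < T.card →
      (f i (List.replicate k z)).length = (f j (List.replicate k z)).length := by
    have key : ∀ i : Fin s,
        (fun v : Fin T.card => (f i (List.replicate (v : ℕ) z)).length)
          = T.orderEmbOfFin rfl := by
      intro i
      refine Finset.orderEmbOfFin_unique rfl (fun v => ?_) (fun v w hvw => ?_)
      · have : (f i (List.replicate (v : ℕ) z)).length ∈ (↑T : Set ℕ) := by
          rw [hsig i]
          exact ⟨List.replicate (v : ℕ) z, by simpa [← hd i] using v.2, rfl⟩
        exact this
      · exact level_lt (hreg i) z hvw (by rw [← hd i]; exact w.2)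
    intro i j k hk
    have h1 := congrFun (key i) ⟨k, hk⟩
    have h2 := congrFun (key j) ⟨k, hk⟩
    simpa using h1.trans h2.symm
  refine ⟨T.card + 1, fun y => match y with | [] => [] | i :: x => i :: f i x,
    ⟨?_, ?_⟩, ?_, ?_⟩
  · intro x y hx hy hxy
    match x, y with
    | [], [] => rfl
    | [], j :: u => simp at hxy
    | i :: t, [] => simp at hxy
    | i :: t, j :: u =>
      have ht : t.length < T.card := by simpa using hx
      have hu : u.length < T.card := by simpa using hy
      have htu : t.length = u.length := by simpa using hxy
      show (i :: f i t).length = (j :: f j u).length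
      simp only [List.length_cons]
      rw [level_eq (hreg i) z (by rw [← hd i]; exact ht),
        level_eq (hreg j) z (by rw [← hd j]; exact hu), htu, hlev i j u.length hu]
  · intro x hx
    match x with
    | [] =>
      refine ⟨id, Function.injective_id, fun i => ?_⟩
      show ([] : List (Fin s)) ++ [i] <+: i :: f i []
      simp
    | j :: t =>
      have ht : t.length + 1 < d j := by rw [← hd j]; simpa using hx
      obtain ⟨π, hπ, hpre⟩ := (hreg j).2 t ht
      refine ⟨π, hπ, fun i => ?_⟩
      show (j :: f j t) ++ [π i] <+: j :: f j (t ++ [i])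
      rw [List.cons_append]
      exact List.cons_prefix_cons.2 ⟨rfl, hpre i⟩
  · intro x hx
    match x with
    | [] => exact h0
    | i :: t => exact hmem i t (by rw [← hd i]; simpa using hx)
  · ext l
    simp only [Finset.coe_insert, Set.mem_insert_iff, Finset.coe_image, Set.mem_image,
      Finset.mem_coe, Set.mem_setOf_eq]
    constructor
    · rintro (rfl | ⟨t, htT, rfl⟩)
      · exact ⟨[], by simp, rfl⟩
      · have : t ∈ (↑T : Set ℕ) := htT
        rw [hsig z] at this
        obtain ⟨x, hx, hfx⟩ := this
        exact ⟨z :: x, by simpa [← hd z] using Nat.succ_lt_succ hx, by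
          show (z :: f z x).length = t + 1
          simp [hfx]⟩
    · rintro ⟨y, hy, rfl⟩
      match y with
      | [] => exact Or.inl rfl
      | i :: t =>
        refine Or.inr ⟨(f i t).length, ?_, ?_⟩
        · have ht : t.length < d i := by rw [← hd i]; simpa using hy
          have : (f i t).length ∈ (↑T : Set ℕ) := by
            rw [hsig i]; exact ⟨t, ht, rfl⟩
          exact this
        · show (f i t).length + 1 = (i :: f i t).length
          simp

lemma gF_nonneg {s n : ℕ} (hs : 0 < s) (H : Set (List (Fin s))) : 0 ≤ gF s n H := by
  have h1 : (0:ℝ) ≤ ((s:ℝ) - 1)⁻¹ := by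
    apply inv_nonneg.2
    have : (1:ℝ) ≤ (s:ℝ) := by exact_mod_cast hs
    linarith
  exact Finset.sum_nonneg fun T _ =>
    Set.indicator_nonneg (fun _ _ => pow_nonneg h1 _) _

lemma gF_ge {s : ℕ} (hs : 2 ≤ s) (n : ℕ) :
    ∀ H : Set (List (Fin s)), ((s:ℝ)/((s:ℝ)-1)) ^ (wF s n H) ≤ gF s n H := by
  classical
  have hs0 : 0 < s := by omega
  have hs1 : (1:ℝ) ≤ (s:ℝ) - 1 := by
    have : (2:ℝ) ≤ (s:ℝ) := by exact_mod_cast hs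
    linarith
  have hsR : (0:ℝ) < (s:ℝ) := by linarith
  have hxpos : (0:ℝ) < ((s:ℝ) - 1)⁻¹ := inv_pos.2 (by linarith)
  have hxmul : ((s:ℝ) - 1)⁻¹ * ((s:ℝ) - 1) = 1 := inv_mul_cancel₀ (by linarith)
  have hcx : (s:ℝ)/((s:ℝ)-1) = 1 + ((s:ℝ) - 1)⁻¹ := by field_simp; ring
  have hcpos : (0:ℝ) < (s:ℝ)/((s:ℝ)-1) := by positivity
  induction n with
  | zero =>
    intro H
    have hw : wF s 0 H = 0 := by
      show ∑ x ∈ FV s 0, _ = 0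
      show ∑ x ∈ (∅ : Finset (List (Fin s))), _ = 0
      simp
    rw [hw, Real.rpow_zero]
    have hg : gF s 0 H = 1 := by
      unfold gF
      rw [Finset.range_zero, Finset.powerset_empty, Finset.sum_singleton,
        Set.indicator_of_mem (by rw [Finset.coe_empty]; exact empty_sig H)]
      simp
    rw [hg]
  | succ n ih =>
    intro H
    -- notation
    set P : Finset (Finset ℕ) := (Finset.range n).powerset with hPdef
    set P' : Finset (Finset ℕ) := (Finset.range (n+1)).powerset with hP'def
    have hgF : ∀ H' : Set (List (Fin s)), gF s n H' =
        ∑ T ∈ P, if (↑T : Set ℕ) ∈ sSigs s H' then ((s:ℝ) - 1)⁻¹ ^ T.card else 0 := by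
      intro H'; unfold gF
      exact Finset.sum_congr rfl fun T _ => Set.indicator_apply _ _ _
    have hgF' : gF s (n+1) H =
        ∑ T ∈ P', if (↑T : Set ℕ) ∈ sSigs s H then ((s:ℝ) - 1)⁻¹ ^ T.card else 0 := by
      unfold gF
      exact Finset.sum_congr rfl fun T _ => Set.indicator_apply _ _ _
    obtain ⟨E, hEdef⟩ : ∃ E : ℝ, E = if [] ∈ H then 1 else 0 := ⟨_, rfl⟩
    have hE0 : 0 ≤ E := by rw [hEdef]; split <;> norm_num
    have hE1 : E ≤ 1 := by rw [hEdef]; split <;> norm_num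
    have hEc : 1 + E * ((s:ℝ) - 1)⁻¹ = ((s:ℝ)/((s:ℝ)-1)) ^ E := by
      rw [hEdef]; split
      · rw [if_pos ‹_›] at *
        simp only [one_mul]
        rw [← hcx, Real.rpow_one]
      · simp [Real.rpow_zero]
    -- the shift maps
    set sh : Finset ℕ → Finset ℕ := fun T => T.image (· + 1) with hshdef
    have hshinj : Function.Injective sh :=
      Finset.image_injective (add_left_injective 1)
    have h0sh : ∀ T : Finset ℕ, 0 ∉ sh T := by
      intro T h
      rw [hshdef] at h
      simp only [Finset.mem_image] at h
      obtain ⟨t, _, ht⟩ := h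
      omega
    have hshcard : ∀ T : Finset ℕ, (sh T).card = T.card := fun T =>
      Finset.card_image_of_injective _ (add_left_injective 1)
    have hinsinj : Function.Injective fun T => insert 0 (sh T) := by
      intro T1 T2 h
      have := congrArg (fun U => Finset.erase U 0) h
      simp only [Finset.erase_insert (h0sh T1), Finset.erase_insert (h0sh T2)] at this
      exact hshinj this
    -- Step A
    have stepA :
        (∑ T ∈ P, if ∃ i : Fin s, (↑T : Set ℕ) ∈ sSigs s {x | i :: x ∈ H}
            then ((s:ℝ) - 1)⁻¹ ^ T.card else 0)
        + (∑ T ∈ P, if ([] ∈ H ∧ ∀ i : Fin s, (↑T : Set ℕ) ∈ sSigs s {x | i :: x ∈ H})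
            then ((s:ℝ) - 1)⁻¹ ^ (T.card + 1) else 0)
        ≤ gF s (n+1) H := by
      rw [hgF']
      have hQ1 : P.image sh ⊆ P' := by
        intro U hU
        rw [Finset.mem_image] at hU
        obtain ⟨T, hT, rfl⟩ := hU
        rw [hPdef, Finset.mem_powerset] at hT
        rw [hP'def, Finset.mem_powerset]
        intro u hu
        rw [hshdef] at hu
        simp only [Finset.mem_image] at hu
        obtain ⟨t, htT, rfl⟩ := hu
        have := hT htT
        rw [Finset.mem_range] at this ⊢
        omega
      have hQ2 : P.image (fun T => insert 0 (sh T)) ⊆ P' := by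
        intro U hU
        rw [Finset.mem_image] at hU
        obtain ⟨T, hT, rfl⟩ := hU
        have h1 : sh T ∈ P' := hQ1 (Finset.mem_image_of_mem sh hT)
        rw [hP'def, Finset.mem_powerset] at h1 ⊢
        intro u hu
        rw [Finset.mem_insert] at hu
        rcases hu with rfl | hu
        · rw [Finset.mem_range]; omega
        · exact h1 hu
      have hdisj : Disjoint (P.image sh) (P.image (fun T => insert 0 (sh T))) := by
        rw [Finset.disjoint_left]
        intro U h1 h2
        rw [Finset.mem_image] at h1 h2
        obtain ⟨T1, _, rfl⟩ := h1
        obtain ⟨T2, _, h⟩ := h2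
        exact h0sh T1 (h ▸ Finset.mem_insert_self 0 (sh T2))
      calc _ ≤ (∑ T ∈ P.image sh, if (↑T : Set ℕ) ∈ sSigs s H
                then ((s:ℝ) - 1)⁻¹ ^ T.card else 0)
              + (∑ T ∈ P.image (fun T => insert 0 (sh T)), if (↑T : Set ℕ) ∈ sSigs s H
                then ((s:ℝ) - 1)⁻¹ ^ T.card else 0) := by
            rw [Finset.sum_image (fun a _ b _ h => hshinj h),
              Finset.sum_image (fun a _ b _ h => hinsinj h)]
            gcongr with T hT T hT
            · -- shifted signature
              by_cases hex : ∃ i : Fin s, (↑T : Set ℕ) ∈ sSigs s {x | i :: x ∈ H}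
              · rw [if_pos hex]
                obtain ⟨i, hi⟩ := hex
                have : (↑(sh T) : Set ℕ) ∈ sSigs s H := by
                  rw [hshdef, Finset.coe_image]
                  exact sig_shift i hi
                rw [if_pos this, hshcard]
              · rw [if_neg hex]
                positivity
            · by_cases hand : [] ∈ H ∧ ∀ i : Fin s, (↑T : Set ℕ) ∈ sSigs s {x | i :: x ∈ H}
              · rw [if_pos hand]
                have : (↑(insert 0 (sh T)) : Set ℕ) ∈ sSigs s H :=
                  sig_combine hs0 hand.1 T hand.2
                rw [if_pos this, Finset.card_insert_of_notMem (h0sh T), hshcard]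
              · rw [if_neg hand]
                positivity
        _ = ∑ T ∈ P.image sh ∪ P.image (fun T => insert 0 (sh T)),
              (if (↑T : Set ℕ) ∈ sSigs s H then ((s:ℝ) - 1)⁻¹ ^ T.card else 0) :=
            (Finset.sum_union hdisj).symm
        _ ≤ _ := by
            apply Finset.sum_le_sum_of_subset_of_nonneg
            · exact Finset.union_subset hQ1 hQ2
            · intro T _ _
              split <;> positivity
    -- Step B : pointwise counting
    have stepB : (1 + E * ((s:ℝ) - 1)⁻¹) / s * ∑ i : Fin s, gF s n {x | i :: x ∈ H}
        ≤ (∑ T ∈ P, if ∃ i : Fin s, (↑T : Set ℕ) ∈ sSigs s {x | i :: x ∈ H}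
            then ((s:ℝ) - 1)⁻¹ ^ T.card else 0)
        + (∑ T ∈ P, if ([] ∈ H ∧ ∀ i : Fin s, (↑T : Set ℕ) ∈ sSigs s {x | i :: x ∈ H})
            then ((s:ℝ) - 1)⁻¹ ^ (T.card + 1) else 0) := by
      have hswap : ∑ i : Fin s, gF s n {x | i :: x ∈ H}
          = ∑ T ∈ P, ∑ i : Fin s,
              (if (↑T : Set ℕ) ∈ sSigs s {x | i :: x ∈ H}
                then ((s:ℝ) - 1)⁻¹ ^ T.card else 0) := by
        rw [Finset.sum_comm]
        exact Finset.sum_congr rfl fun i _ => hgF _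
      rw [hswap, Finset.mul_sum, ← Finset.sum_add_distrib]
      apply Finset.sum_le_sum
      intro T _
      obtain ⟨k, hkdef⟩ : ∃ k : ℕ, k = (Finset.univ.filter
        (fun i : Fin s => (↑T : Set ℕ) ∈ sSigs s {x | i :: x ∈ H})).card := ⟨_, rfl⟩
      have hksum : ∑ i : Fin s,
          (if (↑T : Set ℕ) ∈ sSigs s {x | i :: x ∈ H}
            then ((s:ℝ) - 1)⁻¹ ^ T.card else 0) = k * ((s:ℝ) - 1)⁻¹ ^ T.card := by
        rw [Finset.sum_ite, Finset.sum_const, Finset.sum_const_zero, add_zero, ← hkdef,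
          nsmul_eq_mul]
      rw [hksum, pow_succ]
      obtain ⟨p, hpdef⟩ : ∃ p : ℝ, p = ((s:ℝ) - 1)⁻¹ ^ T.card := ⟨_, rfl⟩
      rw [← hpdef]
      have hppos : (0:ℝ) < p := by rw [hpdef]; positivity
      have hkle : k ≤ s := by
        rw [hkdef]
        exact le_trans (Finset.card_filter_le _ _) (by simp)
      have hsne : (s:ℝ) ≠ 0 := ne_of_gt hsR
      have hs1ne : (s:ℝ) - 1 ≠ 0 := by linarith
      rcases Nat.eq_zero_or_pos k with hk0 | hkpos
      · -- k = 0
        have hnex : ¬ ∃ i : Fin s, (↑T : Set ℕ) ∈ sSigs s {x | i :: x ∈ H} := by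
          rintro ⟨i, hi⟩
          have hmemf : i ∈ Finset.univ.filter
              (fun i : Fin s => (↑T : Set ℕ) ∈ sSigs s {x | i :: x ∈ H}) := by
            simp [hi]
          rw [Finset.card_eq_zero.1 (hkdef.symm.trans hk0)] at hmemf
          exact absurd hmemf (Finset.notMem_empty i)
        rw [if_neg hnex, if_neg (fun hand => hnex ⟨⟨0, hs0⟩, hand.2 _⟩), hk0]
        simp
      · have hex : ∃ i : Fin s, (↑T : Set ℕ) ∈ sSigs s {x | i :: x ∈ H} := by
          obtain ⟨i, hi⟩ := Finset.card_pos.1 (show 0 < (Finset.univ.filter (fun i : Fin s => (↑T : Set ℕ) ∈ sSigs s {x | i :: x ∈ H})).card from hkdef ▸ hkpos)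
          exact ⟨i, (Finset.mem_filter.1 hi).2⟩
        rw [if_pos hex]
        rcases eq_or_lt_of_le hkle with hks | hklt
        · -- k = s : all subtrees occupied
          have hall : ∀ i : Fin s, (↑T : Set ℕ) ∈ sSigs s {x | i :: x ∈ H} := by
            intro i
            have huniv : Finset.univ.filter
                (fun i : Fin s => (↑T : Set ℕ) ∈ sSigs s {x | i :: x ∈ H})
                = Finset.univ := Finset.eq_univ_of_card _ (by rw [← hkdef, hks]; simp)
            -- hkdef : k = card; rewrite card to k
            have hi : i ∈ Finset.univ.filter
                (fun i : Fin s => (↑T : Set ℕ) ∈ sSigs s {x | i :: x ∈ H}) := by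
              rw [huniv]; exact Finset.mem_univ i
            exact (Finset.mem_filter.1 hi).2
          rw [hks]
          by_cases h0 : [] ∈ H
          · rw [if_pos ⟨h0, hall⟩]
            have hEone : E = 1 := by rw [hEdef, if_pos h0]
            rw [hEone]
            have heq : (1 + 1 * ((s:ℝ) - 1)⁻¹) / s * ((s:ℕ) * p)
                = p + p * ((s:ℝ) - 1)⁻¹ := by
              push_cast
              field_simp
            rw [heq]
          · rw [if_neg (fun hand => h0 hand.1)]
            have hEzero : E = 0 := by rw [hEdef, if_neg h0]
            rw [hEzero]
            have heq : (1 + 0 * ((s:ℝ) - 1)⁻¹) / s * ((s:ℕ) * p) = p := by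
              push_cast
              field_simp
              ring
            rw [heq]
            linarith
        · -- 1 ≤ k ≤ s - 1
          have hkr : (k:ℝ) ≤ (s:ℝ) - 1 := by
            have : (k:ℝ) + 1 ≤ (s:ℝ) := by exact_mod_cast hklt
            linarith
          have hterm2 : (0:ℝ) ≤ (if ([] ∈ H ∧ ∀ i : Fin s, (↑T : Set ℕ) ∈ sSigs s
              {x | i :: x ∈ H}) then p * ((s:ℝ) - 1)⁻¹ else 0) := by
            split <;> positivity
          have h1 : (1 + E * ((s:ℝ) - 1)⁻¹) / s * (k:ℝ) ≤ 1 := by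
            have ha : 1 + E * ((s:ℝ) - 1)⁻¹ ≤ (s:ℝ)/((s:ℝ)-1) := by
              rw [hcx]
              nlinarith
            calc (1 + E * ((s:ℝ) - 1)⁻¹) / s * (k:ℝ)
                ≤ ((s:ℝ)/((s:ℝ)-1)) / s * (k:ℝ) := by gcongr
              _ = (k:ℝ) / ((s:ℝ) - 1) := by field_simp
              _ ≤ 1 := by rw [div_le_one (by linarith)]; exact hkr
          have h2 : (1 + E * ((s:ℝ) - 1)⁻¹) / s * ((k:ℝ) * p) ≤ p := by
            have := mul_le_mul_of_nonneg_right h1 hppos.le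
            calc (1 + E * ((s:ℝ) - 1)⁻¹) / s * ((k:ℝ) * p)
                = (1 + E * ((s:ℝ) - 1)⁻¹) / s * (k:ℝ) * p := by ring
              _ ≤ 1 * p := this
              _ = p := one_mul p
          linarith
    -- Step C : AM-GM and assembly
    have hwrec := wF_succ (n := n) hs0 H
    have hind : Set.indicator H (fun _ => (1:ℝ)) [] = E := by
      rw [hEdef]
      by_cases h0 : [] ∈ H
      · rw [Set.indicator_of_mem h0, if_pos h0]
      · rw [Set.indicator_of_notMem h0, if_neg h0]
    have hamgm : ∏ i : Fin s, (gF s n {x | i :: x ∈ H}) ^ ((1:ℝ)/s)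
        ≤ ∑ i : Fin s, ((1:ℝ)/s) * gF s n {x | i :: x ∈ H} := by
      apply Real.geom_mean_le_arith_mean_weighted
      · intro i _; positivity
      · rw [Finset.sum_const, Finset.card_univ, Fintype.card_fin, nsmul_eq_mul]
        field_simp
      · intro i _; exact gF_nonneg hs0 _
    have hprod : ((s:ℝ)/((s:ℝ)-1)) ^ (((1:ℝ)/s) * ∑ i : Fin s, wF s n {x | i :: x ∈ H})
        ≤ ∏ i : Fin s, (gF s n {x | i :: x ∈ H}) ^ ((1:ℝ)/s) := by
      rw [show ((1:ℝ)/s) * ∑ i : Fin s, wF s n {x | i :: x ∈ H}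
          = ∑ i : Fin s, wF s n {x | i :: x ∈ H} * ((1:ℝ)/s) by
        rw [← Finset.sum_mul, mul_comm]]
      rw [Real.rpow_sum_of_pos hcpos]
      apply Finset.prod_le_prod
      · intro i _
        exact Real.rpow_nonneg hcpos.le _
      · intro i _
        rw [Real.rpow_mul hcpos.le]
        exact Real.rpow_le_rpow (Real.rpow_nonneg hcpos.le _) (ih _) (by positivity)
    have hEnn : (0:ℝ) ≤ 1 + E * ((s:ℝ) - 1)⁻¹ := by nlinarith
    calc ((s:ℝ)/((s:ℝ)-1)) ^ wF s (n+1) H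
        = ((s:ℝ)/((s:ℝ)-1)) ^ (E + (1/(s:ℝ)) * ∑ i : Fin s, wF s n {x | i :: x ∈ H}) := by
          rw [hwrec, hind]
      _ = ((s:ℝ)/((s:ℝ)-1)) ^ E
            * ((s:ℝ)/((s:ℝ)-1)) ^ (((1:ℝ)/s) * ∑ i : Fin s, wF s n {x | i :: x ∈ H}) :=
          Real.rpow_add hcpos _ _
      _ = (1 + E * ((s:ℝ) - 1)⁻¹)
            * ((s:ℝ)/((s:ℝ)-1)) ^ (((1:ℝ)/s) * ∑ i : Fin s, wF s n {x | i :: x ∈ H}) := by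
          rw [hEc]
      _ ≤ (1 + E * ((s:ℝ) - 1)⁻¹)
            * (((1:ℝ)/s) * ∑ i : Fin s, gF s n {x | i :: x ∈ H}) := by
          apply mul_le_mul_of_nonneg_left _ hEnn
          calc ((s:ℝ)/((s:ℝ)-1)) ^ (((1:ℝ)/s) * ∑ i : Fin s, wF s n {x | i :: x ∈ H})
              ≤ ∏ i : Fin s, (gF s n {x | i :: x ∈ H}) ^ ((1:ℝ)/s) := hprod
            _ ≤ ∑ i : Fin s, ((1:ℝ)/s) * gF s n {x | i :: x ∈ H} := hamgm
            _ = ((1:ℝ)/s) * ∑ i : Fin s, gF s n {x | i :: x ∈ H} := by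
                rw [Finset.mul_sum]
      _ = (1 + E * ((s:ℝ) - 1)⁻¹) / s * ∑ i : Fin s, gF s n {x | i :: x ∈ H} := by
          ring
      _ ≤ _ := stepB.trans stepA

/-- If `(s/(s-1))^(w(H)) > Σ_{i=0}^{d-1} C(n,i)/(s-1)^i` then `H ⊆ V(T_{n,s})`
contains a replica of `T_{d,s}`. -/
theorem stmt11 (s d n : ℕ) (hs : 2 ≤ s) (hd : 0 < d) (hn : 0 < n)
    (H : Set (List (Fin s))) (hH : H ⊆ sTreeVerts s n)
    (h : ∑ i ∈ Finset.range d, (n.choose i : ℝ) / ((s : ℝ) - 1) ^ i <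
        ((s : ℝ) / ((s : ℝ) - 1)) ^ sWeight s H) :
    ∃ f : List (Fin s) → List (Fin s), IsRegEmbS s d f ∧
      ∀ x : List (Fin s), x.length < d → f x ∈ H := by
  classical
  by_contra hno
  have hs0 : 0 < s := by omega
  have hx0 : (0:ℝ) ≤ ((s:ℝ) - 1)⁻¹ := by
    apply inv_nonneg.2
    have : (2:ℝ) ≤ (s:ℝ) := by exact_mod_cast hs
    linarith
  have key := gF_ge hs n H
  rw [← sWeight_eq_wF hH] at key
  have h1 : gF s n H ≤ ∑ T ∈ (Finset.range n).powerset,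
      if T.card < d then ((s:ℝ) - 1)⁻¹ ^ T.card else 0 := by
    unfold gF
    apply Finset.sum_le_sum
    intro T _
    rw [Set.indicator_apply]
    by_cases hTs : (↑T : Set ℕ) ∈ sSigs s H
    · rw [if_pos hTs, if_pos (sig_card_lt hs0 hno hTs)]
    · rw [if_neg hTs]
      split
      · exact pow_nonneg hx0 _
      · exact le_refl 0
  have h2 : ∑ T ∈ (Finset.range n).powerset,
      (if T.card < d then ((s:ℝ) - 1)⁻¹ ^ T.card else 0)
      = ∑ i ∈ Finset.range d, (n.choose i : ℝ) * ((s:ℝ) - 1)⁻¹ ^ i := by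
    rw [Finset.sum_ite, Finset.sum_const_zero, add_zero]
    have hsep : (Finset.range n).powerset.filter (fun T => T.card < d)
        = (Finset.range d).biUnion (fun i => Finset.powersetCard i (Finset.range n)) := by
      ext T
      simp only [Finset.mem_filter, Finset.mem_powerset, Finset.mem_biUnion, Finset.mem_range,
        Finset.mem_powersetCard]
      constructor
      · rintro ⟨ha, hb⟩; exact ⟨T.card, hb, ha, rfl⟩
      · rintro ⟨i, hi, ha, rfl⟩; exact ⟨ha, hi⟩
    rw [hsep, Finset.sum_biUnion]
    · apply Finset.sum_congr rfl
      intro i _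
      have hcongr : ∀ T ∈ Finset.powersetCard i (Finset.range n),
          ((s:ℝ) - 1)⁻¹ ^ T.card = ((s:ℝ) - 1)⁻¹ ^ i := by
        intro T hT; rw [(Finset.mem_powersetCard.1 hT).2]
      rw [Finset.sum_congr rfl hcongr, Finset.sum_const, Finset.card_powersetCard,
        Finset.card_range, nsmul_eq_mul]
    · intro a _ b _ hab
      exact Finset.disjoint_left.2 fun T hTa hTb =>
        hab ((Finset.mem_powersetCard.1 hTa).2.symm.trans (Finset.mem_powersetCard.1 hTb).2)
  have h3 : ∑ i ∈ Finset.range d, (n.choose i : ℝ) / ((s : ℝ) - 1) ^ i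
      = ∑ i ∈ Finset.range d, (n.choose i : ℝ) * ((s:ℝ) - 1)⁻¹ ^ i := by
    apply Finset.sum_congr rfl
    intro i _
    rw [div_eq_mul_inv, inv_pow]
  rw [h2] at h1
  rw [h3] at h
  linarith
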